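/- Let I be a symmetric monomial ideal in k[x_1,…,x_n], 2 ≤ p ≤ n, 1 ≤ q ≤ ⌊p/2⌋. If f, g are monomials as in the previous setup with fg ∉ I + (x_{p+1},…,x_n)·(I : (x_1,…,x_p)), so f = (x_1⋯x_q)^c and g = (x_{q+1}⋯x_p)^c, then c + 1 = min{λ_1 : λ ∈ Λ(I), ℓ(λ) ≤ p−q}, where the minimum is over generating partitions of I of length at most p−q. -/

import Mathlib

open MvPolynomial


lemma prod_univ_X_pow {k : Type*} [Field k] {n : ℕ} (d : Fin n → ℕ) :
    ∏ i : Fin n, (X i : MvPolynomial (Fin n) k) ^ d i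
      = monomial (Finsupp.equivFunOnFinite.symm d) 1 := by
  rw [← prod_X_pow_eq_monomial]
  rw [show (∏ x ∈ (Finsupp.equivFunOnFinite.symm d).support,
      (X x : MvPolynomial (Fin n) k) ^ (Finsupp.equivFunOnFinite.symm d) x)
      = ∏ x ∈ (Finsupp.equivFunOnFinite.symm d).support, (X x : MvPolynomial (Fin n) k) ^ d x
    from Finset.prod_congr rfl fun x _ => by rw [Finsupp.coe_equivFunOnFinite_symm]]
  refine (Finset.prod_subset (Finset.subset_univ _) ?_).symm
  intro x _ hx
  have h0 : d x = 0 := by simpa using (Finsupp.notMem_support_iff.mp hx)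
  rw [h0, pow_zero]

lemma mem_span_orbit_iff {k : Type*} [Field k] {n : ℕ} (Λ : Set (Fin n → ℕ))
    (e : Fin n →₀ ℕ) :
    monomial e (1:k) ∈ Ideal.span
      {f | ∃ lam ∈ Λ, ∃ π : Equiv.Perm (Fin n), f = ∏ i : Fin n, X i ^ lam (π i)} ↔
    ∃ lam ∈ Λ, ∃ π : Equiv.Perm (Fin n), ∀ i, lam (π i) ≤ e i := by
  have hset : {f | ∃ lam ∈ Λ, ∃ π : Equiv.Perm (Fin n), f = ∏ i : Fin n, X i ^ lam (π i)}
      = (fun s => monomial s (1:k)) ''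
        {e' : Fin n →₀ ℕ | ∃ lam ∈ Λ, ∃ π : Equiv.Perm (Fin n),
          e' = Finsupp.equivFunOnFinite.symm (fun i => lam (π i))} := by
    ext x
    constructor
    · rintro ⟨lam, hlam, π, rfl⟩
      exact ⟨_, ⟨lam, hlam, π, rfl⟩, (prod_univ_X_pow _).symm⟩
    · rintro ⟨e', ⟨lam, hlam, π, rfl⟩, rfl⟩
      exact ⟨lam, hlam, π, (prod_univ_X_pow _).symm⟩
  rw [hset, mem_ideal_span_monomial_image]
  classical
  have hsupp : (monomial e (1:k)).support = {e} := by
    rw [support_monomial, if_neg one_ne_zero]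
  rw [hsupp]
  simp only [Finset.mem_singleton, forall_eq, Set.mem_setOf_eq]
  constructor
  · rintro ⟨si, ⟨lam, hlam, π, rfl⟩, hle⟩
    exact ⟨lam, hlam, π, fun i => by simpa using hle i⟩
  · rintro ⟨lam, hlam, π, hle⟩
    refine ⟨_, ⟨lam, hlam, π, rfl⟩, fun i => by simpa using hle i⟩

lemma exists_good_perm {n p q : ℕ} (hqp : q < p) (hpn : p ≤ n) :
    ∃ π : Equiv.Perm (Fin n),
      (∀ i : Fin n, q ≤ i.val ∧ i.val < p → (π i).val < p - q) ∧
      (∀ i : Fin n, ¬(q ≤ i.val ∧ i.val < p) → p - q ≤ (π i).val) := by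
  set σ : Fin n → Fin n := fun i =>
    if _ : q ≤ i.val ∧ i.val < p then ⟨i.val - q, by omega⟩
    else if h2 : i.val < q then ⟨i.val + (p - q), by omega⟩ else i with hσ
  have hval : ∀ i : Fin n, (σ i).val =
      if q ≤ i.val ∧ i.val < p then i.val - q
      else if i.val < q then i.val + (p - q) else i.val := by
    intro i
    simp only [hσ]
    split_ifs <;> rfl
  have hinj : Function.Injective σ := by
    intro a b h
    have h' := congrArg Fin.val h
    rw [hval a, hval b] at h'
    have ha := a.isLt
    have hb := b.isLt
    apply Fin.ext
    split_ifs at h' <;> omega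
  refine ⟨Equiv.ofBijective σ (Finite.injective_iff_bijective.mp hinj), ?_, ?_⟩
  · intro i hi
    have := hval i
    rw [Equiv.ofBijective_apply, this]
    split_ifs <;> omega
  · intro i hi
    have := hval i
    rw [Equiv.ofBijective_apply, this]
    have := i.isLt
    split_ifs <;> omega

lemma card_filter_interval {n a b : ℕ} (hb : b ≤ n) :
    (Finset.univ.filter (fun x : Fin n => a ≤ x.val ∧ x.val < b)).card = b - a := by
  classical
  have himg : (Finset.univ.filter (fun x : Fin n => a ≤ x.val ∧ x.val < b)).image Fin.val
      = Finset.Ico a b := by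
    ext t
    simp only [Finset.mem_image, Finset.mem_filter, Finset.mem_univ, true_and, Finset.mem_Ico]
    constructor
    · rintro ⟨x, hx, rfl⟩; exact hx
    · intro ht; exact ⟨⟨t, by omega⟩, ht, rfl⟩
  have hc := Finset.card_image_of_injective
    (Finset.univ.filter (fun x : Fin n => a ≤ x.val ∧ x.val < b)) Fin.val_injective
  rw [himg, Nat.card_Ico] at hc
  omega

/-- let `I` be the symmetric monomial ideal generated by the
`S_n`-orbits of the monomials `x^λ`, `λ ∈ Λ` a set of partitions (antitone
exponent vectors). If `f = (x_1⋯x_q)^c ∈ I : (x_1,…,x_q)` and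
`g = (x_{q+1}⋯x_p)^c ∈ I : (x_{q+1},…,x_p)` are monomials with
`fg ∉ I + (x_{p+1},…,x_n)·(I : (x_1,…,x_p))`, then
`c + 1 = min{λ₁ : λ ∈ Λ(I), ℓ(λ) ≤ p − q}`. -/
theorem stmt11 {k : Type*} [Field k] {n p q : ℕ}
    (hn : 0 < n) (hp2 : 2 ≤ p) (hpn : p ≤ n) (hq1 : 1 ≤ q) (hq2 : q ≤ p / 2)
    (Λ : Set (Fin n → ℕ)) (hΛ : ∀ lam ∈ Λ, Antitone lam)
    (I : Ideal (MvPolynomial (Fin n) k))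
    (hI : I = Ideal.span
      {f | ∃ lam ∈ Λ, ∃ π : Equiv.Perm (Fin n), f = ∏ i : Fin n, X i ^ lam (π i)})
    (c : ℕ)
    (f g : MvPolynomial (Fin n) k)
    (hf : f = (∏ i ∈ Finset.univ.filter (fun i : Fin n => i.val < q), X i) ^ c)
    (hg : g = (∏ i ∈ Finset.univ.filter (fun i : Fin n => q ≤ i.val ∧ i.val < p), X i) ^ c)
    (hfc : f ∈ Submodule.colon I
      ((Ideal.span {x | ∃ i : Fin n, i.val < q ∧ x = X i} : Ideal (MvPolynomial (Fin n) k)) : Set (MvPolynomial (Fin n) k)))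
    (hgc : g ∈ Submodule.colon I
      ((Ideal.span {x | ∃ i : Fin n, q ≤ i.val ∧ i.val < p ∧ x = X i} : Ideal (MvPolynomial (Fin n) k)) : Set (MvPolynomial (Fin n) k)))
    (hng : f * g ∉ I +
      Ideal.span {x | ∃ i : Fin n, p ≤ i.val ∧ x = X i} *
        Submodule.colon I ((Ideal.span {x | ∃ i : Fin n, i.val < p ∧ x = X i} : Ideal (MvPolynomial (Fin n) k)) : Set (MvPolynomial (Fin n) k))) :
    c + 1 = sInf {m : ℕ | ∃ lam ∈ Λ,
      (∀ i : Fin n, (p - q : ℕ) ≤ i.val → lam i = 0) ∧ m = lam ⟨0, hn⟩} := by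
  classical
  have hqp : q < p := by omega
  have hqn : q < n := lt_of_lt_of_le hqp hpn
  set j : Fin n := ⟨q, hqn⟩ with hj
  set dg : Fin n → ℕ := fun i => if q ≤ i.val ∧ i.val < p then c else 0 with hdg
  -- g as a monomial
  have hgm : g = monomial (Finsupp.equivFunOnFinite.symm dg) 1 := by
    rw [hg, ← Finset.prod_pow, Finset.prod_filter, ← prod_univ_X_pow dg]
    refine Finset.prod_congr rfl fun i _ => ?_
    simp only [hdg]
    split_ifs with h
    · rfl
    · rw [pow_zero]
  -- X j * g ∈ I
  have hXj : (X j : MvPolynomial (Fin n) k) ∈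
      Ideal.span {x | ∃ i : Fin n, q ≤ i.val ∧ i.val < p ∧ x = X i} :=
    Ideal.subset_span ⟨j, le_refl q, hqp, rfl⟩
  have hXg : g * X j ∈ I := by
    have := Submodule.mem_colon.mp hgc (X j) hXj
    simpa [smul_eq_mul] using this
  have hXmono : (X j : MvPolynomial (Fin n) k) = monomial (Finsupp.single j 1) 1 := by
    rw [← X_pow_eq_monomial, pow_one]
  have hprod : g * X j
      = monomial (Finsupp.equivFunOnFinite.symm dg + Finsupp.single j 1) 1 := by
    rw [hgm, hXmono, monomial_mul, one_mul]
  rw [hprod, hI] at hXg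
  obtain ⟨lam, hlam, π, hle⟩ := (mem_span_orbit_iff Λ _).mp hXg
  have hle' : ∀ i : Fin n, lam (π i) ≤ dg i + (if j = i then 1 else 0) := by
    intro i
    have := hle i
    simpa [Finsupp.add_apply, Finsupp.single_apply,
      Finsupp.coe_equivFunOnFinite_symm] using this
  have hA : ∀ i, lam (π i) ≤ c + 1 := by
    intro i
    refine le_trans (hle' i) ?_
    simp only [hdg]
    split_ifs <;> omega
  have hB : ∀ i : Fin n, ¬(q ≤ i.val ∧ i.val < p) → lam (π i) = 0 := by
    intro i hi
    have h1 := hle' i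
    have h2 : dg i = 0 := by simp only [hdg]; rw [if_neg hi]
    have h3 : (if j = i then 1 else 0) = 0 := by
      rw [if_neg]
      intro h
      exact hi (h ▸ ⟨le_refl q, hqp⟩)
    omega
  have hm0le : lam ⟨0, hn⟩ ≤ c + 1 := by
    have := hA (π.symm ⟨0, hn⟩)
    rwa [Equiv.apply_symm_apply] at this
  have hlen : ∀ i : Fin n, p - q ≤ i.val → lam i = 0 := by
    intro j0 hj0
    by_contra hne
    set s := Finset.univ.filter (fun x : Fin n => 0 ≤ x.val ∧ x.val < j0.val + 1) with hs
    set t := Finset.univ.filter (fun x : Fin n => q ≤ x.val ∧ x.val < p) with ht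
    have hst : s.card ≤ t.card := by
      apply Finset.card_le_card_of_injOn (fun x => π.symm x)
      · intro x hx
        simp only [hs, Finset.mem_coe, Finset.coe_filter, Set.mem_setOf_eq, Finset.mem_filter, Finset.mem_univ, true_and] at hx
        simp only [ht, Finset.mem_coe, Finset.coe_filter, Set.mem_setOf_eq, Finset.mem_filter, Finset.mem_univ, true_and]
        by_contra hcon
        have h0 := hB (π.symm x) hcon
        rw [Equiv.apply_symm_apply] at h0
        have hxle : x ≤ j0 := by rw [Fin.le_def]; omega
        exact hne (Nat.le_zero.mp (h0 ▸ hΛ lam hlam hxle))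
      · exact fun a _ b _ h => π.symm.injective h
    have hcs : s.card = j0.val + 1 := by
      have hlt := j0.isLt
      have := card_filter_interval (n := n) (a := 0) (b := j0.val + 1) (by omega)
      simpa [hs] using this
    have hct : t.card = p - q := by
      have := card_filter_interval (n := n) (a := q) (b := p) hpn
      simpa [ht] using this
    omega
  have hmem : lam ⟨0, hn⟩ ∈ {m : ℕ | ∃ lam ∈ Λ,
      (∀ i : Fin n, (p - q : ℕ) ≤ i.val → lam i = 0) ∧ m = lam ⟨0, hn⟩} :=
    ⟨lam, hlam, hlen, rfl⟩
  have hlb : ∀ m ∈ {m : ℕ | ∃ lam ∈ Λ,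
      (∀ i : Fin n, (p - q : ℕ) ≤ i.val → lam i = 0) ∧ m = lam ⟨0, hn⟩}, c + 1 ≤ m := by
    rintro m ⟨mu, hmu, hmul, rfl⟩
    by_contra hcon
    push_neg at hcon
    apply hng
    obtain ⟨σ, hσ1, hσ2⟩ := exists_good_perm hqp hpn
    have hgI : g ∈ I := by
      rw [hgm, hI]
      refine (mem_span_orbit_iff Λ _).mpr ⟨mu, hmu, σ, fun i => ?_⟩
      rw [Finsupp.coe_equivFunOnFinite_symm]
      by_cases hc2 : q ≤ i.val ∧ i.val < p
      · have hmono : mu (σ i) ≤ mu ⟨0, hn⟩ :=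
          hΛ mu hmu (by rw [Fin.le_def]; exact Nat.zero_le _)
        simp only [hdg]
        rw [if_pos hc2]
        omega
      · have h0 := hmul (σ i) (hσ2 i hc2)
        simp only [hdg]
        rw [if_neg hc2]
        omega
    rw [Submodule.add_eq_sup]
    exact Submodule.mem_sup_left (Ideal.mul_mem_left I f hgI)
  have key : lam ⟨0, hn⟩ = c + 1 := le_antisymm hm0le (hlb _ hmem)
  exact le_antisymm (le_csInf ⟨_, hmem⟩ hlb) (key ▸ Nat.sInf_le hmem)
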